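/- (Jacobi triple product specialization) As formal power series in q, ∑_{k∈ℤ} (-1)^k q^{k(3k-1)/2} = ∏_{j=1}^∞ (1-q^j); equivalently f(-q,-q^2) = φ(q) where φ(q) = ∏_{j≥1}(1-q^j). -/

import Mathlib

open PowerSeries Finset

/-- The pentagonal-number series `∑_{k∈ℤ} (-1)^k q^{k(3k-1)/2} = f(-q,-q²)`.
For the coefficient of `q^m` only the finitely many `k` with `|k| ≤ m+1` can
contribute, so the sum is written over that range. -/
noncomputable def pentagonalSeries : PowerSeries ℤ :=
  PowerSeries.mk fun m =>
    ∑ k ∈ Finset.Icc (-(m : ℤ) - 1) ((m : ℤ) + 1),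
      if k * (3 * k - 1) / 2 = (m : ℤ) then (-1 : ℤ) ^ k.natAbs else 0



lemma coeff_prod_one_sub (m n : ℕ) :
    PowerSeries.coeff m (∏ j ∈ Finset.Icc 1 n, (1 - (PowerSeries.X : PowerSeries ℤ) ^ j)) =
    ∑ S ∈ (Finset.Icc 1 n).powerset, if S.sum id = m then (-1:ℤ)^S.card else 0 := by
  have h : ∀ j ∈ Finset.Icc 1 n, (1 - (X:PowerSeries ℤ)^j) = (-(X^j) + 1) := by
    intro j _; ring
  rw [Finset.prod_congr rfl h, Finset.prod_add, map_sum]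
  refine Finset.sum_congr rfl fun S hS => ?_
  rw [Finset.prod_const_one, mul_one]
  have h2 : ∏ i ∈ S, (-((X:PowerSeries ℤ)^i)) = PowerSeries.C ((-1:ℤ)^S.card) * X^(S.sum id) := by
    rw [Finset.prod_congr rfl (fun i (_ : i ∈ S) =>
      show -((X:PowerSeries ℤ)^i) = (PowerSeries.C (-1)) * X^i by simp),
      Finset.prod_mul_distrib, Finset.prod_const, Finset.prod_pow_eq_pow_sum, ← map_pow]
    rfl
  rw [h2, PowerSeries.coeff_C_mul, PowerSeries.coeff_X_pow]
  simp only [mul_ite, mul_one, mul_zero, id_eq, eq_comm]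

namespace PentAux

/-- exceptional (staircase) sets: `{a,…,2a-1}` or `{a,…,2a-2}` -/
def IsExc (S : Finset ℕ) : Prop :=
  ∃ a : ℕ, 1 ≤ a ∧ (S = Finset.Icc a (2*a-1) ∨ S = Finset.Icc a (2*a-2))

def top (S : Finset ℕ) : ℕ := S.sup id

noncomputable def bot (S : Finset ℕ) : ℕ :=
  if h : S.Nonempty then S.min' h else 0

noncomputable def runLen (S : Finset ℕ) : ℕ :=
  if h : (0:ℕ) ∉ S then
    Nat.find (p := fun t => top S - t ∉ S) ⟨top S, by simpa using h⟩
  else 0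

/-- Franklin's involution. -/
noncomputable def fr (S : Finset ℕ) : Finset ℕ :=
  if bot S ≤ runLen S then
    ((S.erase (bot S)).erase (top S - bot S + 1)) ∪ {top S + 1}
  else (S.erase (top S)) ∪ {top S - runLen S, runLen S}

variable {S : Finset ℕ} {x t : ℕ}

lemma le_top (hx : x ∈ S) : x ≤ top S := Finset.le_sup (f := id) hx

lemma top_eq_max' (h : S.Nonempty) : top S = S.max' h := by
  refine le_antisymm (Finset.sup_le fun x hx => Finset.le_max' _ _ hx) (le_top (S.max'_mem h))

lemma top_mem (h : S.Nonempty) : top S ∈ S := by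
  rw [top_eq_max' h]; exact S.max'_mem h

lemma bot_mem (h : S.Nonempty) : bot S ∈ S := by
  rw [bot, dif_pos h]; exact S.min'_mem h

lemma bot_le (hx : x ∈ S) : bot S ≤ x := by
  rw [bot, dif_pos ⟨x, hx⟩]; exact S.min'_le _ hx

lemma run_mem (h0 : (0:ℕ) ∉ S) (ht : t < runLen S) : top S - t ∈ S := by
  rw [runLen, dif_pos h0] at ht
  have := Nat.find_min (p := fun t => top S - t ∉ S) ⟨top S, by simpa using h0⟩ ht
  simpa using this

lemma run_not_mem (h0 : (0:ℕ) ∉ S) : top S - runLen S ∉ S := by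
  rw [runLen, dif_pos h0]
  exact Nat.find_spec (p := fun t => top S - t ∉ S) ⟨top S, by simpa using h0⟩

lemma runLen_pos (h : S.Nonempty) (h0 : (0:ℕ) ∉ S) : 1 ≤ runLen S := by
  by_contra hr
  have hr0 : runLen S = 0 := by omega
  have := run_not_mem h0
  rw [hr0, Nat.sub_zero] at this
  exact this (top_mem h)

lemma runLen_le (h0 : (0:ℕ) ∉ S) : runLen S ≤ top S := by
  rw [runLen, dif_pos h0]
  exact Nat.find_min' _ (by simpa using h0)


lemma runLen_eq {k : ℕ} (h0 : (0:ℕ) ∉ S) (hk : top S - k ∉ S)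
    (hall : ∀ t < k, top S - t ∈ S) : runLen S = k := by
  rw [runLen, dif_pos h0, Nat.find_eq_iff]
  exact ⟨hk, fun t ht => not_not_intro (hall t ht)⟩

lemma runLen_ge {k : ℕ} (h0 : (0:ℕ) ∉ S) (hall : ∀ t < k, top S - t ∈ S) :
    k ≤ runLen S := by
  rw [runLen, dif_pos h0, Nat.le_find_iff]
  exact fun t ht => not_not_intro (hall t ht)

lemma stepA (hne : S.Nonempty) (h1 : ∀ x ∈ S, 1 ≤ x) (hexc : ¬IsExc S)
    (hAB : bot S ≤ runLen S) :
    (∀ x ∈ fr S, 1 ≤ x ∧ x ≤ top S + 1) ∧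
    (fr S).sum id = S.sum id ∧
    S.card = (fr S).card + 1 ∧
    ¬ IsExc (fr S) ∧
    fr (fr S) = S := by
  have h0 : (0:ℕ) ∉ S := fun h => by have := h1 0 h; omega
  set s := bot S with hs
  set ℓ := top S with hl
  set r := runLen S with hr
  have hs1 : 1 ≤ s := h1 _ (bot_mem hne)
  have hsl : s ≤ ℓ := le_top (bot_mem hne)
  have hr1 : 1 ≤ r := runLen_pos hne h0
  have hrl : r ≤ ℓ := runLen_le h0
  have hsrun : s ≤ ℓ - r + 1 := by
    have h' : ℓ - (r-1) ∈ S := run_mem h0 (by omega)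
    have := bot_le h'
    omega
  have hkey : 2*s ≤ ℓ := by
    by_contra hc
    apply hexc
    refine ⟨s, hs1, Or.inl ?_⟩
    have hls : ℓ = 2*s-1 := by omega
    apply Finset.Subset.antisymm
    · intro x hx
      rw [Finset.mem_Icc]
      exact ⟨bot_le hx, by have := le_top hx; omega⟩
    · intro y hy
      rw [Finset.mem_Icc] at hy
      have h' : ℓ - (ℓ - y) ∈ S := run_mem h0 (by omega)
      have he : ℓ - (ℓ - y) = y := by omega
      rwa [he] at h'
  set u := ℓ - s + 1 with hu
  have hu_mem : u ∈ S := by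
    have h' : ℓ - (s-1) ∈ S := run_mem h0 (by omega)
    have he : ℓ - (s-1) = u := by omega
    rwa [he] at h'
  have hl1 : ℓ + 1 ∉ S := fun h => by have := le_top h; omega
  have hfr : fr S = ((S.erase s).erase u) ∪ {ℓ+1} := by
    rw [fr, if_pos hAB]
  have hmem : ∀ x, x ∈ fr S ↔ ((x ∈ S ∧ x ≠ s ∧ x ≠ u) ∨ x = ℓ+1) := by
    intro x
    simp only [hfr, Finset.mem_union, Finset.mem_erase, Finset.mem_singleton]
    tauto
  have hbound : ∀ x ∈ fr S, 1 ≤ x ∧ x ≤ ℓ + 1 := by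
    intro x hx
    rcases (hmem x).1 hx with ⟨hxS, _, _⟩ | rfl
    · exact ⟨h1 x hxS, by have := le_top hxS; omega⟩
    · omega
  have h0' : (0:ℕ) ∉ fr S := fun h => by have := hbound 0 h; omega
  have hne' : (fr S).Nonempty := ⟨ℓ+1, (hmem _).2 (Or.inr rfl)⟩
  have hd : Disjoint ((S.erase s).erase u) {ℓ+1} := by
    simp only [Finset.disjoint_singleton_right, Finset.mem_erase]
    intro h; exact hl1 h.2.2
  have hu_mem' : u ∈ S.erase s := Finset.mem_erase.2 ⟨by omega, hu_mem⟩
  have hsum : (fr S).sum id = S.sum id := by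
    have e0 : (fr S).sum id = ((S.erase s).erase u).sum id + (ℓ+1) := by
      rw [hfr, Finset.sum_union hd, Finset.sum_singleton]; rfl
    have e1 : ((S.erase s).erase u).sum id + u = (S.erase s).sum id :=
      Finset.sum_erase_add _ _ hu_mem'
    have e2 : (S.erase s).sum id + s = S.sum id :=
      Finset.sum_erase_add _ _ (bot_mem hne)
    omega
  have hcard : S.card = (fr S).card + 1 := by
    have e0 : (fr S).card = ((S.erase s).erase u).card + 1 := by
      rw [hfr, Finset.card_union_of_disjoint hd, Finset.card_singleton]
    have e1 : ((S.erase s).erase u).card + 1 = (S.erase s).card :=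
      Finset.card_erase_add_one hu_mem'
    have e2 : (S.erase s).card + 1 = S.card :=
      Finset.card_erase_add_one (bot_mem hne)
    omega
  have htop' : top (fr S) = ℓ + 1 := by
    apply le_antisymm
    · exact Finset.sup_le fun x hx => (hbound x hx).2
    · exact le_top ((hmem _).2 (Or.inr rfl))
  have hbot' : s < bot (fr S) := by
    have hb := bot_mem hne'
    rcases (hmem _).1 hb with ⟨hxS, hxs, _⟩ | he
    · have := bot_le (S := S) hxS
      omega
    · omega
  have hu_not : u ∉ fr S := by
    intro hc
    rcases (hmem u).1 hc with ⟨_, _, h⟩ | h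
    · exact h rfl
    · omega
  have hrun' : runLen (fr S) = s := by
    apply runLen_eq h0'
    · rw [htop']
      have he : ℓ + 1 - s = u := by omega
      rw [he]; exact hu_not
    · intro t ht
      rcases Nat.eq_zero_or_pos t with rfl | htpos
      · rw [htop']
        simpa using (hmem _).2 (Or.inr rfl)
      · have hS : ℓ - (t-1) ∈ S := run_mem h0 (by omega)
        have hv : top (fr S) - t = ℓ - (t-1) := by rw [htop']; omega
        rw [hv]
        exact (hmem _).2 (Or.inl ⟨hS, by omega, by omega⟩)
  have hbranch : ¬ (bot (fr S) ≤ runLen (fr S)) := by rw [hrun']; omega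
  have hffr : fr (fr S) = S := by
    rw [fr, if_neg hbranch, htop', hrun']
    have he : ℓ + 1 - s = u := by omega
    rw [he]
    ext x
    simp only [Finset.mem_union, Finset.mem_erase, Finset.mem_insert,
      Finset.mem_singleton, hmem x]
    constructor
    · rintro (⟨hne1, (⟨hxS, _, _⟩ | rfl)⟩ | rfl | rfl)
      · exact hxS
      · exact absurd rfl hne1
      · exact hu_mem
      · exact bot_mem hne
    · intro hxS
      by_cases hxs : x = s
      · right; right; exact hxs
      by_cases hxu : x = u
      · right; left; exact hxu
      · exact Or.inl ⟨fun h => hl1 (h ▸ hxS), Or.inl ⟨hxS, hxs, hxu⟩⟩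
  refine ⟨hbound, hsum, hcard, ?_, hffr⟩
  rintro ⟨a, ha1, hform⟩
  have hex : ∃ b, (fr S = Finset.Icc a b) ∧ (b = 2*a-1 ∨ b = 2*a-2) := by
    rcases hform with h | h
    exacts [⟨_, h, Or.inl rfl⟩, ⟨_, h, Or.inr rfl⟩]
  obtain ⟨b, hab, hbcase⟩ := hex
  have hlb : ℓ+1 ∈ Finset.Icc a b := hab ▸ (hmem _).2 (Or.inr rfl)
  rw [Finset.mem_Icc] at hlb
  have hbmem : b ∈ fr S := by
    rw [hab]; exact Finset.mem_Icc.2 ⟨by omega, le_rfl⟩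
  have hble : b ≤ ℓ+1 := (hbound b hbmem).2
  have hua : u < a := by
    by_contra h
    exact hu_not (hab ▸ Finset.mem_Icc.2 ⟨by omega, by omega⟩)
  omega


lemma stepB (hne : S.Nonempty) (h1 : ∀ x ∈ S, 1 ≤ x) (hexc : ¬IsExc S)
    (hAB : ¬ (bot S ≤ runLen S)) :
    (∀ x ∈ fr S, 1 ≤ x ∧ x ≤ top S + 1) ∧
    (fr S).sum id = S.sum id ∧
    (fr S).card = S.card + 1 ∧
    ¬ IsExc (fr S) ∧
    fr (fr S) = S := by
  have h0 : (0:ℕ) ∉ S := fun h => by have := h1 0 h; omega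
  set s := bot S with hs
  set ℓ := top S with hl
  set r := runLen S with hr
  have hs1 : 1 ≤ s := h1 _ (bot_mem hne)
  have hsl : s ≤ ℓ := le_top (bot_mem hne)
  have hr1 : 1 ≤ r := runLen_pos hne h0
  have hrl : r ≤ ℓ := runLen_le h0
  have hrs : r < s := by omega
  have hsrun : s ≤ ℓ - r + 1 := by
    have h' : ℓ - (r-1) ∈ S := run_mem h0 (by omega)
    have := bot_le h'
    omega
  -- key : ℓ ≥ 2r + 1
  have hkey : 2*r + 1 ≤ ℓ := by
    by_contra hc
    -- then ℓ = 2r, s = r+1, S = Icc (r+1) (2r)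
    apply hexc
    refine ⟨s, hs1, Or.inr ?_⟩
    have hls : ℓ = 2*r ∧ s = r + 1 := by omega
    apply Finset.Subset.antisymm
    · intro x hx
      rw [Finset.mem_Icc]
      exact ⟨bot_le hx, by have := le_top hx; omega⟩
    · intro y hy
      rw [Finset.mem_Icc] at hy
      have h' : ℓ - (ℓ - y) ∈ S := run_mem h0 (by omega)
      have he : ℓ - (ℓ - y) = y := by omega
      rwa [he] at h'
  have hl_mem : ℓ ∈ S := top_mem hne
  have hlr_not : ℓ - r ∉ S := run_not_mem h0
  have hr_not : r ∉ S := fun h => by have := bot_le h; omega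
  have hfr : fr S = (S.erase ℓ) ∪ {ℓ - r, r} := by
    rw [fr, if_neg hAB]
  have hmem : ∀ x, x ∈ fr S ↔ ((x ∈ S ∧ x ≠ ℓ) ∨ x = ℓ - r ∨ x = r) := by
    intro x
    simp only [hfr, Finset.mem_union, Finset.mem_erase, Finset.mem_insert,
      Finset.mem_singleton]
    tauto
  have hbound : ∀ x ∈ fr S, 1 ≤ x ∧ x ≤ ℓ - 1 := by
    intro x hx
    rcases (hmem x).1 hx with ⟨hxS, hxl⟩ | rfl | rfl
    · exact ⟨h1 x hxS, by have := le_top hxS; omega⟩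
    · omega
    · omega
  have h0' : (0:ℕ) ∉ fr S := fun h => by have := hbound 0 h; omega
  have hr_mem' : r ∈ fr S := (hmem _).2 (Or.inr (Or.inr rfl))
  have hlr_mem' : ℓ - r ∈ fr S := (hmem _).2 (Or.inr (Or.inl rfl))
  have hne' : (fr S).Nonempty := ⟨r, hr_mem'⟩
  have hd : Disjoint (S.erase ℓ) ({ℓ - r, r} : Finset ℕ) := by
    simp only [Finset.disjoint_insert_right, Finset.disjoint_singleton_right,
      Finset.mem_erase]
    exact ⟨fun h => hlr_not h.2, fun h => hr_not h.2⟩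
  have hsum : (fr S).sum id = S.sum id := by
    have e0 : (fr S).sum id = (S.erase ℓ).sum id + ((ℓ - r) + r) := by
      rw [hfr, Finset.sum_union hd, Finset.sum_pair (by omega)]; rfl
    have e2 : (S.erase ℓ).sum id + ℓ = S.sum id :=
      Finset.sum_erase_add _ _ hl_mem
    omega
  have hcard : (fr S).card = S.card + 1 := by
    have e0 : (fr S).card = (S.erase ℓ).card + 2 := by
      rw [hfr, Finset.card_union_of_disjoint hd, Finset.card_pair (by omega)]
    have e2 : (S.erase ℓ).card + 1 = S.card :=
      Finset.card_erase_add_one hl_mem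
    omega
  have htop' : top (fr S) = ℓ - 1 := by
    apply le_antisymm
    · exact Finset.sup_le fun x hx => (hbound x hx).2
    · rcases Nat.lt_or_ge 1 r with h2 | h2
      · -- r ≥ 2 : ℓ - 1 ∈ S and ≠ ℓ
        have hS : ℓ - 1 ∈ S := run_mem h0 (by omega)
        exact le_top ((hmem _).2 (Or.inl ⟨hS, by omega⟩))
      · -- r = 1 : ℓ - r = ℓ - 1
        have : ℓ - r = ℓ - 1 := by omega
        exact le_top (this ▸ hlr_mem')
  have hbot' : bot (fr S) = r := by
    apply le_antisymm (bot_le hr_mem')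
    have hb := bot_mem hne'
    rcases (hmem _).1 hb with ⟨hxS, _⟩ | he | he
    · have := bot_le (S := S) hxS; omega
    · omega
    · omega
  have hrun' : r ≤ runLen (fr S) := by
    apply runLen_ge h0'
    intro t ht
    rcases Nat.lt_or_ge (t+1) r with h2 | h2
    · have hS : ℓ - (t+1) ∈ S := run_mem h0 h2
      have hv : top (fr S) - t = ℓ - (t+1) := by rw [htop']; omega
      rw [hv]
      exact (hmem _).2 (Or.inl ⟨hS, by omega⟩)
    · -- t + 1 = r
      have hv : top (fr S) - t = ℓ - r := by rw [htop']; omega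
      rw [hv]; exact hlr_mem'
  have hbranch : bot (fr S) ≤ runLen (fr S) := by rw [hbot']; exact hrun'
  have hffr : fr (fr S) = S := by
    rw [fr, if_pos hbranch, hbot', htop']
    have he : ℓ - 1 - r + 1 = ℓ - r := by omega
    have he2 : ℓ - 1 + 1 = ℓ := by omega
    rw [he, he2]
    ext x
    simp only [Finset.mem_union, Finset.mem_erase, Finset.mem_singleton, hmem x]
    constructor
    · rintro (⟨hne2, ⟨hne1, (⟨hxS, _⟩ | rfl | rfl)⟩⟩ | rfl)
      · exact hxS
      · exact absurd rfl hne2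
      · exact absurd rfl hne1
      · exact hl_mem
    · intro hxS
      by_cases hxl : x = ℓ
      · right; exact hxl
      · exact Or.inl ⟨fun h => hlr_not (h ▸ hxS), fun h => hr_not (h ▸ hxS),
          Or.inl ⟨hxS, hxl⟩⟩
  refine ⟨fun x hx => ⟨(hbound x hx).1, by have := (hbound x hx).2; omega⟩,
    hsum, hcard, ?_, hffr⟩
  rintro ⟨a, ha1, hform⟩
  have hex : ∃ b, (fr S = Finset.Icc a b) ∧ (b = 2*a-1 ∨ b = 2*a-2) := by
    rcases hform with h | h
    exacts [⟨_, h, Or.inl rfl⟩, ⟨_, h, Or.inr rfl⟩]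
  obtain ⟨b, hab, hbcase⟩ := hex
  have hrb : r ∈ Finset.Icc a b := hab ▸ hr_mem'
  rw [Finset.mem_Icc] at hrb
  have hamem : a ∈ fr S := by
    rw [hab]; exact Finset.mem_Icc.2 ⟨le_rfl, by omega⟩
  have hbmem : b ∈ fr S := by
    rw [hab]; exact Finset.mem_Icc.2 ⟨by omega, le_rfl⟩
  have har : a = r := le_antisymm hrb.1 (by rw [← hbot']; exact bot_le hamem)
  have hbl : b = ℓ - 1 := by
    have h1' := le_top hbmem
    rw [htop'] at h1'
    have h2' : ℓ - 1 ∈ fr S := by rw [← htop']; exact top_mem ⟨r, hr_mem'⟩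
    rw [hab, Finset.mem_Icc] at h2'
    omega
  omega


lemma bot_Icc {a b : ℕ} (h : a ≤ b) : bot (Finset.Icc a b) = a := by
  have hm : a ∈ Finset.Icc a b := Finset.mem_Icc.2 ⟨le_rfl, h⟩
  exact le_antisymm (bot_le hm) ((Finset.mem_Icc.1 (bot_mem ⟨a, hm⟩)).1)

lemma top_Icc {a b : ℕ} (h : a ≤ b) : top (Finset.Icc a b) = b := by
  have hm : b ∈ Finset.Icc a b := Finset.mem_Icc.2 ⟨h, le_rfl⟩
  exact le_antisymm ((Finset.mem_Icc.1 (top_mem ⟨b, hm⟩)).2) (le_top hm)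

lemma sum_Icc_mul_two (a b : ℕ) :
    (Finset.Icc a b).sum id * 2 + a*(a-1) = (b+1)*b ∨ b + 1 < a := by
  rcases Nat.lt_or_ge b a with h | h
  · rcases Nat.lt_or_ge (b+1) a with h2 | h2
    · exact Or.inr h2
    · -- a = b + 1, Icc empty
      have ha : a = b + 1 := by omega
      left
      rw [ha, Finset.Icc_eq_empty_of_lt (by omega)]
      simp
  · left
    have key : ∀ x y : ℕ, x ≤ y →
        (Finset.Ico x y).sum id * 2 + x*(x-1) = y*(y-1) := by
      intro x y hxy
      have hc := Finset.sum_Ico_consecutive id (Nat.zero_le x) hxy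
      have h1 := Finset.sum_range_id_mul_two x
      have h2 := Finset.sum_range_id_mul_two y
      rw [← Finset.range_eq_Ico, ← Finset.range_eq_Ico] at hc
      have hc' : (Finset.range x).sum id + (Finset.Ico x y).sum id
          = (Finset.range y).sum id := hc
      have hx : (Finset.range x).sum id = ∑ i ∈ Finset.range x, i := rfl
      have hy : (Finset.range y).sum id = ∑ i ∈ Finset.range y, i := rfl
      rw [hx] at hc'
      rw [hy] at hc'
      omega
    have := key a (b+1) (by omega)
    rw [Finset.Ico_add_one_right_eq_Icc] at this
    have hb : b + 1 - 1 = b := by omega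
    rw [hb] at this
    omega

lemma fr_props {m : ℕ} {S : Finset ℕ} (hsub : S ⊆ Finset.Icc 1 (m+1))
    (hsum : S.sum id = m) (hexc : ¬ IsExc S) :
    (fr S ⊆ Finset.Icc 1 (m+1)) ∧ (fr S).sum id = m ∧ ¬ IsExc (fr S) ∧
    fr (fr S) = S ∧ ((fr S).card + 1 = S.card ∨ S.card + 1 = (fr S).card) := by
  have h1 : ∀ x ∈ S, 1 ≤ x := fun x hx => (Finset.mem_Icc.1 (hsub hx)).1
  have hne : S.Nonempty := by
    rcases Finset.eq_empty_or_nonempty S with rfl | h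
    · exact absurd ⟨1, le_rfl, Or.inr (by simp)⟩ hexc
    · exact h
  have htops : top S ≤ m := by
    have h2 : id (top S) ≤ S.sum id :=
      Finset.single_le_sum (fun i _ => Nat.zero_le _) (top_mem hne)
    exact le_trans h2 (le_of_eq hsum)
  by_cases hAB : bot S ≤ runLen S
  · obtain ⟨hb, hs, hc, he, hf⟩ := stepA hne h1 hexc hAB
    exact ⟨fun x hx => Finset.mem_Icc.2 ⟨(hb x hx).1, by have := (hb x hx).2; omega⟩,
      by rw [hs, hsum], he, hf, Or.inl (by omega)⟩
  · obtain ⟨hb, hs, hc, he, hf⟩ := stepB hne h1 hexc hAB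
    exact ⟨fun x hx => Finset.mem_Icc.2 ⟨(hb x hx).1, by have := (hb x hx).2; omega⟩,
      by rw [hs, hsum], he, hf, Or.inr (by omega)⟩

lemma cancel (m : ℕ) [DecidablePred IsExc] :
    ∑ S ∈ ((Finset.Icc 1 (m+1)).powerset.filter (fun S => S.sum id = m)).filter
      (fun S => ¬ IsExc S), (-1:ℤ)^S.card = 0 := by
  have hmem : ∀ S, S ∈ ((Finset.Icc 1 (m+1)).powerset.filter
      (fun S => S.sum id = m)).filter (fun S => ¬ IsExc S) ↔
      (S ⊆ Finset.Icc 1 (m+1) ∧ S.sum id = m ∧ ¬ IsExc S) := by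
    intro S
    simp only [Finset.mem_filter, Finset.mem_powerset]
    tauto
  apply Finset.sum_involution (fun S _ => fr S)
  · intro S hS
    obtain ⟨h1, h2, h3⟩ := (hmem S).1 hS
    obtain ⟨_, _, _, _, hcard⟩ := fr_props h1 h2 h3
    rcases hcard with h | h
    · rw [← h, pow_succ]; ring
    · rw [← h, pow_succ]; ring
  · intro S hS _
    obtain ⟨h1, h2, h3⟩ := (hmem S).1 hS
    obtain ⟨_, _, _, _, hcard⟩ := fr_props h1 h2 h3
    intro hc
    rw [hc] at hcard
    omega
  · intro S hS
    obtain ⟨h1, h2, h3⟩ := (hmem S).1 hS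
    obtain ⟨g1, g2, g3, _, _⟩ := fr_props h1 h2 h3
    exact (hmem _).2 ⟨g1, g2, g3⟩
  · intro S hS
    obtain ⟨h1, h2, h3⟩ := (hmem S).1 hS
    exact (fr_props h1 h2 h3).2.2.2.1


noncomputable def jf (S : Finset ℕ) : ℤ :=
  if S = ∅ then 0
  else if top S = 2 * bot S - 1 then (bot S : ℤ) else 1 - (bot S : ℤ)

def eS (k : ℤ) : Finset ℕ :=
  if 0 < k then Finset.Icc k.toNat (2*k.toNat - 1)
  else Finset.Icc ((-k).toNat + 1) (2*(-k).toNat)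

lemma sum1 (n : ℕ) (hn : 1 ≤ n) :
    (((Finset.Icc n (2*n-1)).sum id : ℕ) : ℤ) * 2 = (n:ℤ)*(3*(n:ℤ)-1) := by
  rcases sum_Icc_mul_two n (2*n-1) with h | h
  · zify [hn, show 1 ≤ 2*n by omega] at h
    push_cast at h ⊢
    linear_combination h
  · omega

lemma sum2 (n : ℕ) :
    (((Finset.Icc (n+1) (2*n)).sum id : ℕ) : ℤ) * 2 = (n:ℤ)*(3*(n:ℤ)+1) := by
  rcases sum_Icc_mul_two (n+1) (2*n) with h | h
  · zify [show 1 ≤ n + 1 by omega] at h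
    push_cast at h ⊢
    linear_combination h
  · omega

lemma jf1 (n : ℕ) (hn : 1 ≤ n) : jf (Finset.Icc n (2*n-1)) = n := by
  have hne : Finset.Icc n (2*n-1) ≠ ∅ := by
    apply Finset.nonempty_iff_ne_empty.1
    exact ⟨n, Finset.mem_Icc.2 ⟨le_rfl, by omega⟩⟩
  rw [jf, if_neg hne, top_Icc (by omega), bot_Icc (by omega), if_pos rfl]

lemma jf2 (n : ℕ) : jf (Finset.Icc (n+1) (2*n)) = -(n:ℤ) := by
  rcases Nat.eq_zero_or_pos n with rfl | hn
  · rw [jf, if_pos (by simp)]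
    simp
  · have hne : Finset.Icc (n+1) (2*n) ≠ ∅ := by
      apply Finset.nonempty_iff_ne_empty.1
      exact ⟨n+1, Finset.mem_Icc.2 ⟨le_rfl, by omega⟩⟩
    rw [jf, if_neg hne, top_Icc (by omega), bot_Icc (by omega),
      if_neg (by omega)]
    push_cast
    ring

lemma excS {m : ℕ} {S : Finset ℕ} (hsum : S.sum id = m) (hexc : IsExc S) :
    ∃ n : ℕ,
      (1 ≤ n ∧ S = Finset.Icc n (2*n-1) ∧ jf S = (n:ℤ) ∧ S.card = n ∧
        (n:ℤ)*(3*(n:ℤ)-1) = 2*(m:ℤ))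
      ∨ (S = Finset.Icc (n+1) (2*n) ∧ jf S = -(n:ℤ) ∧ S.card = n ∧
        (n:ℤ)*(3*(n:ℤ)+1) = 2*(m:ℤ)) := by
  obtain ⟨a, ha1, hform | hform⟩ := hexc
  · refine ⟨a, Or.inl ⟨ha1, hform, by rw [hform]; exact jf1 a ha1, ?_, ?_⟩⟩
    · rw [hform, Nat.card_Icc]; omega
    · have := sum1 a ha1
      rw [← hform, hsum] at this
      linarith
  · refine ⟨a - 1, Or.inr ⟨?_, ?_, ?_, ?_⟩⟩
    · rw [hform]
      congr 1 <;> omega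
    · rw [hform, show a = (a-1)+1 by omega, show 2*((a-1)+1)-2 = 2*(a-1) by omega]
      exact jf2 (a-1)
    · rw [hform, Nat.card_Icc]; omega
    · have h2 := sum2 (a-1)
      rw [show (a-1)+1 = a by omega, show 2*(a-1) = 2*a-2 by omega, ← hform,
        hsum] at h2
      have hc : ((a:ℤ) - 1) = ((a - 1 : ℕ) : ℤ) := by omega
      rw [← hc] at h2 ⊢
      linarith

lemma excK {m : ℕ} {k : ℤ} (h : k*(3*k-1)/2 = (m:ℤ)) : k*(3*k-1) = 2*(m:ℤ) := by
  have heven : ∃ c, k*(3*k-1) = 2*c := by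
    rcases Int.even_or_odd k with ⟨c, hc⟩ | ⟨c, hc⟩
    · exact ⟨c*(3*k-1), by rw [hc]; ring⟩
    · exact ⟨k*(3*c+1), by rw [hc]; ring⟩
  obtain ⟨c, hc⟩ := heven
  rw [hc] at h ⊢
  omega


lemma exc_sum (m : ℕ) [DecidablePred IsExc] :
    ∑ S ∈ ((Finset.Icc 1 (m+1)).powerset.filter (fun S => S.sum id = m)).filter
      (fun S => IsExc S), (-1:ℤ)^S.card
    = ∑ k ∈ (Finset.Icc (-(m:ℤ)-1) ((m:ℤ)+1)).filter
        (fun k => k*(3*k-1)/2 = (m:ℤ)), (-1:ℤ)^k.natAbs := by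
  have hmemS : ∀ S : Finset ℕ, (S ∈ ((Finset.Icc 1 (m+1)).powerset.filter
      (fun S => S.sum id = m)).filter (fun S => IsExc S)) ↔
      (S ⊆ Finset.Icc 1 (m+1) ∧ S.sum id = m ∧ IsExc S) := by
    intro S; simp only [Finset.mem_filter, Finset.mem_powerset]; tauto
  have hmemK : ∀ k : ℤ, (k ∈ (Finset.Icc (-(m:ℤ)-1) ((m:ℤ)+1)).filter
      (fun k => k*(3*k-1)/2 = (m:ℤ))) ↔
      ((-(m:ℤ)-1 ≤ k ∧ k ≤ (m:ℤ)+1) ∧ k*(3*k-1)/2 = (m:ℤ)) := by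
    intro k; simp only [Finset.mem_filter, Finset.mem_Icc]
  refine Finset.sum_bij' (fun S _ => jf S) (fun k _ => eS k) ?_ ?_ ?_ ?_ ?_
  · -- jf S lands in the k-set
    intro S hS
    beta_reduce
    obtain ⟨hsub, hsum, hexc⟩ := (hmemS S).1 hS
    obtain ⟨n, hcase⟩ := excS hsum hexc
    rcases hcase with ⟨hn1, hform, hjf, hcard, hZ⟩ | ⟨hform, hjf, hcard, hZ⟩
    · refine (hmemK _).2 ?_
      rw [hjf]
      have hn1' : (1:ℤ) ≤ (n:ℤ) := by exact_mod_cast hn1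
      have hm : (n:ℤ) ≤ (m:ℤ)+1 := by nlinarith [hZ]
      refine ⟨⟨by omega, hm⟩, ?_⟩
      rw [hZ]
      omega
    · refine (hmemK _).2 ?_
      rw [hjf]
      have hn0 : (0:ℤ) ≤ (n:ℤ) := by positivity
      have hm : (n:ℤ) ≤ (m:ℤ)+1 := by nlinarith [hZ, sq_nonneg ((n:ℤ))]
      refine ⟨⟨by omega, by omega⟩, ?_⟩
      rw [show -(n:ℤ) * (3 * -(n:ℤ) - 1) = (n:ℤ)*(3*(n:ℤ)+1) from by ring, hZ]
      omega
  · -- eS k lands in the S-set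
    intro k hk
    beta_reduce
    obtain ⟨⟨hk1, hk2⟩, hcond⟩ := (hmemK k).1 hk
    have hkm := excK hcond
    rcases Int.lt_or_le 0 k with hpos | hneg
    · have hkn : k = (k.toNat : ℤ) := by omega
      set n := k.toNat with hn
      have hn1 : (1:ℕ) ≤ n := by omega
      have hZ : (n:ℤ)*(3*(n:ℤ)-1) = 2*(m:ℤ) := by rw [← hkn]; exact hkm
      have heq : eS k = Finset.Icc n (2*n-1) := by rw [eS, if_pos hpos]
      refine (hmemS _).2 ⟨?_, ?_, ?_⟩
      · rw [heq]
        intro x hx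
        rw [Finset.mem_Icc] at hx ⊢
        have hn1' : (1:ℤ) ≤ (n:ℤ) := by exact_mod_cast hn1
        have hb : 2*(n:ℤ)-1 ≤ (m:ℤ)+1 := by nlinarith [hZ]
        omega
      · have h1 := sum1 n hn1
        rw [hZ] at h1
        rw [heq]
        omega
      · rw [heq]; exact ⟨n, hn1, Or.inl rfl⟩
    · have hkn : k = -(((-k).toNat : ℕ) : ℤ) := by omega
      set n := (-k).toNat with hn
      have hZ : (n:ℤ)*(3*(n:ℤ)+1) = 2*(m:ℤ) := by
        rw [hkn] at hkm; linear_combination hkm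
      have heq : eS k = Finset.Icc (n+1) (2*n) := by rw [eS, if_neg (by omega)]
      refine (hmemS _).2 ⟨?_, ?_, ?_⟩
      · rw [heq]
        intro x hx
        rw [Finset.mem_Icc] at hx ⊢
        have hn0 : (0:ℤ) ≤ (n:ℤ) := by positivity
        have hb : 2*(n:ℤ) ≤ (m:ℤ)+1 := by nlinarith [hZ, sq_nonneg (2*(n:ℤ)-1)]
        omega
      · have h1 := sum2 n
        rw [hZ] at h1
        rw [heq]
        omega
      · rw [heq]
        exact ⟨n+1, by omega, Or.inr (by rw [show 2*(n+1)-2 = 2*n by omega])⟩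
  · -- left inverse
    intro S hS
    beta_reduce
    obtain ⟨hsub, hsum, hexc⟩ := (hmemS S).1 hS
    obtain ⟨n, hcase⟩ := excS hsum hexc
    rcases hcase with ⟨hn1, hform, hjf, hcard, hZ⟩ | ⟨hform, hjf, hcard, hZ⟩
    · rw [hjf, eS, if_pos (by exact_mod_cast hn1 : (0:ℤ) < (n:ℤ))]
      rw [Int.toNat_natCast]
      exact hform.symm
    · rw [hjf, eS, if_neg (by omega)]
      rw [show (-(-(n:ℤ))).toNat = n by omega]
      exact hform.symm
  · -- right inverse
    intro k hk
    beta_reduce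
    obtain ⟨⟨hk1, hk2⟩, hcond⟩ := (hmemK k).1 hk
    rcases Int.lt_or_le 0 k with hpos | hneg
    · have hkn : k = (k.toNat : ℤ) := by omega
      have hn1 : (1:ℕ) ≤ k.toNat := by omega
      rw [eS, if_pos hpos, jf1 _ hn1]
      omega
    · rw [eS, if_neg (by omega), jf2]
      omega
  · -- values agree
    intro S hS
    beta_reduce
    obtain ⟨hsub, hsum, hexc⟩ := (hmemS S).1 hS
    obtain ⟨n, hcase⟩ := excS hsum hexc
    rcases hcase with ⟨hn1, hform, hjf, hcard, hZ⟩ | ⟨hform, hjf, hcard, hZ⟩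
    · rw [hcard, hjf, Int.natAbs_natCast]
    · rw [hcard, hjf]
      congr 1
      omega

end PentAux

open PentAux in
/-- Euler's pentagonal number theorem:
`∑_{k∈ℤ} (-1)^k q^{k(3k-1)/2} = ∏_{j=1}^∞ (1-q^j)`, i.e. `f(-q,-q²) = φ(q)`,
stated coefficientwise (factors with `j > m` do not affect the coefficient of `q^m`). -/
theorem stmt8 (m : ℕ) :
    PowerSeries.coeff m pentagonalSeries =
      PowerSeries.coeff m (∏ j ∈ Finset.Icc 1 (m + 1), (1 - (PowerSeries.X : PowerSeries ℤ) ^ j)) := by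
  classical
  rw [coeff_prod_one_sub m (m+1)]
  simp only [_root_.pentagonalSeries, PowerSeries.coeff_mk]
  rw [← Finset.sum_filter, ← Finset.sum_filter]
  calc ∑ k ∈ (Finset.Icc (-(m:ℤ)-1) ((m:ℤ)+1)).filter
        (fun k => k*(3*k-1)/2 = (m:ℤ)), (-1:ℤ)^k.natAbs
      = ∑ S ∈ ((Finset.Icc 1 (m+1)).powerset.filter (fun S => S.sum id = m)).filter
          (fun S => IsExc S), (-1:ℤ)^S.card := (exc_sum m).symm
    _ = ∑ S ∈ ((Finset.Icc 1 (m+1)).powerset.filter (fun S => S.sum id = m)).filter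
          (fun S => IsExc S), (-1:ℤ)^S.card
        + ∑ S ∈ ((Finset.Icc 1 (m+1)).powerset.filter (fun S => S.sum id = m)).filter
          (fun S => ¬ IsExc S), (-1:ℤ)^S.card := by rw [cancel m, add_zero]
    _ = ∑ S ∈ (Finset.Icc 1 (m+1)).powerset.filter (fun S => S.sum id = m),
          (-1:ℤ)^S.card := Finset.sum_filter_add_sum_filter_not _ _ _
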